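/- Let (X_1,…,X_n) be a Markov tree process over a finite set S defined by a tree T = (V,E) with breadth-first ordering and transition kernels p_0, (p_{uv})_{(u,v)∈E}. Define θ_{uv} = max_{y,y'} ‖p_{uv}(·|y) − p_{uv}(·|y')‖_TV. Fix 1 ≤ i < j ≤ n such that T_i^j = T_i ∩ {j,…,n} ≠ ∅, and let j_0 = min T_i^j. Then η̄_{ij} ≤ ∏_{d = dep(i)+1}^{dep(j_0)} α({θ_{uv} : v ∈ lev_T(d), (u,v) ∈ E}), where α is the recursively defined symmetric function and η̄_{ij} = sup_{y,w,w'} η_{ij}(y,w,w'). -/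

import Mathlib

def alpha : (k : ℕ) → (Fin k → ℝ) → ℝ
  | 0, _ => 0
  | k + 1, x => x (Fin.last k) + (1 - x (Fin.last k)) * alpha k (x ∘ Fin.castSucc)

/-- The binary operation underlying `α`. -/
def opA (a b : ℝ) : ℝ := a + b - a * b

instance : Std.Commutative opA := ⟨fun a b => by unfold opA; ring⟩
instance : Std.Associative opA := ⟨fun a b c => by unfold opA; ring⟩

/-- `α` applied to the multiset of values `f v`, `v ∈ s` (well defined by symmetry of `α_k`). -/
def alphaOn {ι : Type*} (s : Finset ι) (f : ι → ℝ) : ℝ := s.fold opA 0 f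

def desc {n : ℕ} (par : Fin n → Fin n) (i v : Fin n) : Prop :=
  Relation.ReflTransGen (fun a b : Fin n => (b : ℕ) ≠ 0 ∧ par b = a) i v

open Classical in
noncomputable def Tij {n : ℕ} (par : Fin n → Fin n) (i j : Fin n) : Finset (Fin n) :=
  Finset.univ.filter fun v => desc par i v ∧ j ≤ v

open Classical in
noncomputable def condP {n : ℕ} {S : Type*} [Fintype S]
    (par : Fin n → Fin n) (p : Fin n → S → S → ℝ) (i j : Fin n)
    (y : Fin n → S) (s : {v : Fin n // j ≤ v} → S) : ℝ :=
  ∑ x ∈ Finset.univ.filter (fun x : Fin n → S =>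
      (∀ v, v ≤ i → x v = y v) ∧ ∀ v : {v : Fin n // j ≤ v}, x v.1 = s v),
    ∏ v ∈ Finset.univ.filter (fun v : Fin n => i < v), p v (x v) (x (par v))

noncomputable def eta {n : ℕ} {S : Type*} [Fintype S]
    (par : Fin n → Fin n) (p : Fin n → S → S → ℝ) (i j : Fin n)
    (y y' : Fin n → S) : ℝ :=
  (1 / 2) * ∑ s : {v : Fin n // j ≤ v} → S,
    |condP par p i j y s - condP par p i j y' s|

/-- The `(par v, v)`-contraction coefficient
`θ_{par v, v} = max_{b,b'} ‖p_v(·|b) − p_v(·|b')‖_TV`. -/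
noncomputable def thetaCoef {n : ℕ} {S : Type*} [Fintype S] [Nonempty S]
    (p : Fin n → S → S → ℝ) (v : Fin n) : ℝ :=
  Finset.univ.sup' Finset.univ_nonempty
    (fun bb' : S × S => (1 / 2) * ∑ a, |p v a bb'.1 - p v a bb'.2|)


open Finset
open scoped Classical

/-- fixed-instance indicator -/
noncomputable def ind (P : Prop) : ℝ := if P then 1 else 0

lemma ind_pos {P : Prop} (h : P) : ind P = 1 := by simp [ind, h]
lemma ind_neg {P : Prop} (h : ¬ P) : ind P = 0 := by simp [ind, h]
lemma ind_nonneg (P : Prop) : 0 ≤ ind P := by by_cases h : P <;> simp [ind, h]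
lemma ind_le_one (P : Prop) : ind P ≤ 1 := by by_cases h : P <;> simp [ind, h]
lemma ind_congr {P Q : Prop} (h : P ↔ Q) : ind P = ind Q := by
  by_cases hP : P
  · rw [ind_pos hP, ind_pos (h.mp hP)]
  · rw [ind_neg hP, ind_neg (fun hQ => hP (h.mpr hQ))]
lemma ind_and (P Q : Prop) : ind (P ∧ Q) = ind P * ind Q := by
  by_cases hP : P <;> by_cases hQ : Q <;> simp [ind, hP, hQ]
lemma ite_eq_ind_mul (P : Prop) [Decidable P] (f : ℝ) :
    (if P then f else 0) = ind P * f := by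
  by_cases h : P <;> simp [ind, h]

section Generic
variable {ι : Type*} {S : Type*} [DecidableEq ι] [Fintype ι] [Fintype S]

lemma abs_eq_add_sub_two_min (x y : ℝ) : |x - y| = x + y - 2 * min x y := by
  rcases le_total x y with h | h
  · rw [abs_of_nonpos (by linarith), min_eq_left h]; ring
  · rw [abs_of_nonneg (by linarith), min_eq_right h]; ring

omit [DecidableEq ι] in
lemma tv_min (μ ν : ι → ℝ) (hμ : ∑ a, μ a = 1) (hν : ∑ a, ν a = 1) :
    (1/2) * ∑ a, |μ a - ν a| = 1 - ∑ a, min (μ a) (ν a) := by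
  have h : ∑ a, |μ a - ν a| = ∑ a, (μ a + ν a - 2 * min (μ a) (ν a)) :=
    Finset.sum_congr rfl fun a _ => abs_eq_add_sub_two_min _ _
  rw [h, Finset.sum_sub_distrib, Finset.sum_add_distrib, hμ, hν, ← Finset.mul_sum]
  ring

omit [DecidableEq ι] in
lemma ind_forall (Q : ι → Prop) : ind (∀ v, Q v) = ∏ v, ind (Q v) := by
  by_cases h : ∀ v, Q v
  · rw [ind_pos h]; symm; apply Finset.prod_eq_one; intro v _; rw [ind_pos (h v)]
  · rw [ind_neg h]; symm
    obtain ⟨v, hv⟩ := not_forall.mp h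
    exact Finset.prod_eq_zero (Finset.mem_univ v) (ind_neg hv)

/-- factorization of a sum over a function space of a product of per-coordinate terms -/
lemma sum_prod_fn (F : ι → S → ℝ) :
    ∑ z : ι → S, ∏ v, F v (z v) = ∏ v, ∑ a, F v a := by
  rw [Finset.prod_univ_sum (fun _ => (univ : Finset S)) F, Fintype.piFinset_univ]

omit [DecidableEq ι] in
lemma prod_min_le (f g : ι → ℝ) (hf : ∀ v, 0 ≤ f v) (hg : ∀ v, 0 ≤ g v) :
    ∏ v, min (f v) (g v) ≤ min (∏ v, f v) (∏ v, g v) := by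
  refine le_min ?_ ?_ <;>
    exact Finset.prod_le_prod (fun v _ => le_min (hf v) (hg v))
      (fun v _ => by simp [min_le_left, min_le_right])

/-- replacing pinned values by other pinned values, when the summand does not
depend on coordinates where the pins differ -/
lemma sum_override (t : ι → Prop) (g g' : ι → S) (F : (ι → S) → ℝ)
    (hF : ∀ x x' : ι → S, (∀ v, (¬ t v ∨ g v = g' v) → x v = x' v) → F x = F x') :
    ∑ x : ι → S, ind (∀ v, t v → x v = g v) * F x
      = ∑ x : ι → S, ind (∀ v, t v → x v = g' v) * F x := by
  have conv1 : ∀ (h : ι → S) (x : ι → S), ind (∀ v, t v → x v = h v) * F x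
      = if (∀ v, t v → x v = h v) then F x else 0 := fun h x => by
    by_cases hc : (∀ v, t v → x v = h v) <;> simp [ind, hc]
  rw [Finset.sum_congr rfl fun x _ => conv1 g x,
    Finset.sum_congr rfl fun x _ => conv1 g' x,
    ← Finset.sum_filter, ← Finset.sum_filter]
  refine Finset.sum_nbij' (fun x => fun v => if t v then g' v else x v)
    (fun x => fun v => if t v then g v else x v) ?_ ?_ ?_ ?_ ?_
  · intro x _
    simp only [Finset.mem_filter, Finset.mem_univ, true_and]
    intro v hv; simp [hv]
  · intro x _
    simp only [Finset.mem_filter, Finset.mem_univ, true_and]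
    intro v hv; simp [hv]
  · intro x hx
    simp only [Finset.mem_filter, Finset.mem_univ, true_and] at hx
    funext v; by_cases hv : t v <;> simp [hv, hx v]
  · intro x hx
    simp only [Finset.mem_filter, Finset.mem_univ, true_and] at hx
    funext v; by_cases hv : t v <;> simp [hv, hx v]
  · intro x hx
    simp only [Finset.mem_filter, Finset.mem_univ, true_and] at hx
    apply hF
    intro v hv
    rcases hv with hv | hv
    · simp [hv]
    · by_cases h't : t v
      · simp [h't, ← hv, hx v h't]
      · simp [h't]

/-- marginalizing out one unconstrained coordinate -/
lemma sum_marg (m : ι) (s0 : S) (P : (ι → S) → Prop)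
    (hP : ∀ x a, P (Function.update x m a) ↔ P x)
    (q : S → (ι → S) → ℝ) (hq : ∀ x a b, q a (Function.update x m b) = q a x) :
    ∑ x : ι → S, ind (P x) * q (x m) x
      = ∑ x : ι → S, ind (P x ∧ x m = s0) * (∑ a, q a x) := by
  have step1 : ∀ x : ι → S, ind (P x) * q (x m) x
      = ∑ a, ind (P x ∧ x m = a) * q a x := by
    intro x
    by_cases hx : P x
    · rw [ind_pos hx, one_mul]
      have h1 : ∀ a, ind (P x ∧ x m = a) * q a x
          = if x m = a then q (x m) x else 0 := by
        intro a
        by_cases h : x m = a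
        · subst h; rw [ind_pos ⟨hx, rfl⟩, one_mul, if_pos rfl]
        · rw [ind_neg (fun hc => h hc.2), zero_mul, if_neg h]
      rw [Finset.sum_congr rfl fun a _ => h1 a, Finset.sum_ite_eq univ (x m)]
      simp
    · rw [ind_neg hx, zero_mul]
      symm
      exact Finset.sum_eq_zero fun a _ => by rw [ind_neg (fun hc => hx hc.1), zero_mul]
  calc ∑ x : ι → S, ind (P x) * q (x m) x
      = ∑ x : ι → S, ∑ a, ind (P x ∧ x m = a) * q a x :=
        Finset.sum_congr rfl fun x _ => step1 x
    _ = ∑ a, ∑ x : ι → S, ind (P x ∧ x m = a) * q a x := Finset.sum_comm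
    _ = ∑ a, ∑ x : ι → S, ind (P x ∧ x m = s0) * q a x := by
        refine Finset.sum_congr rfl fun a _ => ?_
        have conv1 : ∀ (c : S) (x : ι → S), ind (P x ∧ x m = c) * q a x
            = if (P x ∧ x m = c) then q a x else 0 := fun c x => by
          by_cases hc : (P x ∧ x m = c) <;> simp [ind, hc]
        rw [Finset.sum_congr rfl fun x _ => conv1 a x,
          Finset.sum_congr rfl fun x _ => conv1 s0 x,
          ← Finset.sum_filter, ← Finset.sum_filter]
        refine Finset.sum_nbij' (fun x : ι → S => Function.update x m s0)
          (fun x : ι → S => Function.update x m a) ?_ ?_ ?_ ?_ ?_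
        · intro x hx
          simp only [Finset.mem_filter, Finset.mem_univ, true_and] at *
          exact ⟨(hP x s0).mpr hx.1, by simp⟩
        · intro x hx
          simp only [Finset.mem_filter, Finset.mem_univ, true_and] at *
          exact ⟨(hP x a).mpr hx.1, by simp⟩
        · intro x hx
          simp only [Finset.mem_filter, Finset.mem_univ, true_and] at hx
          simp only [Function.update_idem, ← hx.2, Function.update_eq_self]
        · intro x hx
          simp only [Finset.mem_filter, Finset.mem_univ, true_and] at hx
          simp only [Function.update_idem, ← hx.2, Function.update_eq_self]
        · intro x _
          exact (hq x a s0).symm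
    _ = ∑ x : ι → S, ∑ a, ind (P x ∧ x m = s0) * q a x := Finset.sum_comm
    _ = ∑ x : ι → S, ind (P x ∧ x m = s0) * (∑ a, q a x) :=
        Finset.sum_congr rfl fun x _ => (Finset.mul_sum _ _ _).symm

end Generic

lemma dobrushin {A : Type*} {B : Type*} [Fintype A] [Fintype B]
    (μ ν : A → ℝ) (K : A → B → ℝ) (θ : ℝ)
    (hsum : ∑ a, μ a = ∑ a, ν a)
    (hθ : ∀ a a', (1/2) * ∑ b, |K a b - K a' b| ≤ θ) :
    (1/2) * ∑ b, |∑ a, (μ a - ν a) * K a b| ≤ θ * ((1/2) * ∑ a, |μ a - ν a|) := by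
  set dp : A → ℝ := fun a => max (μ a - ν a) 0 with hdp_def
  set dm : A → ℝ := fun a => max (ν a - μ a) 0 with hdm_def
  have hdp : ∀ a, 0 ≤ dp a := fun a => le_max_right _ _
  have hdm : ∀ a, 0 ≤ dm a := fun a => le_max_right _ _
  have hsplit : ∀ a, μ a - ν a = dp a - dm a := by
    intro a
    rcases le_total (ν a) (μ a) with h | h
    · rw [hdp_def, hdm_def]; dsimp only
      rw [max_eq_left (by linarith), max_eq_right (by linarith)]; ring
    · rw [hdp_def, hdm_def]; dsimp only
      rw [max_eq_right (by linarith), max_eq_left (by linarith)]; ring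
  have habs : ∀ a, |μ a - ν a| = dp a + dm a := by
    intro a
    rcases le_total (ν a) (μ a) with h | h
    · rw [abs_of_nonneg (by linarith), hdp_def, hdm_def]; dsimp only
      rw [max_eq_left (by linarith), max_eq_right (by linarith)]; ring
    · rw [abs_of_nonpos (by linarith), hdp_def, hdm_def]; dsimp only
      rw [max_eq_right (by linarith), max_eq_left (by linarith)]; ring
  set P := ∑ a, dp a with hP_def
  have hPm : ∑ a, dm a = P := by
    have h0 : ∑ a, (dp a - dm a) = 0 := by
      rw [Finset.sum_congr rfl fun a _ => (hsplit a).symm, Finset.sum_sub_distrib, hsum]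
      ring
    rw [Finset.sum_sub_distrib] at h0
    rw [hP_def]; linarith
  have hRHS : (1/2) * ∑ a, |μ a - ν a| = P := by
    rw [Finset.sum_congr rfl fun a _ => habs a, Finset.sum_add_distrib, hPm, hP_def]
    ring
  rw [hRHS]
  have hP0 : 0 ≤ P := Finset.sum_nonneg fun a _ => hdp a
  rcases eq_or_lt_of_le hP0 with hP | hP
  · have hdp0 : ∀ a, dp a = 0 := fun a =>
      (Finset.sum_eq_zero_iff_of_nonneg (fun a _ => hdp a)).mp hP.symm a (mem_univ a)
    have hdm0 : ∀ a, dm a = 0 := fun a =>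
      (Finset.sum_eq_zero_iff_of_nonneg (fun a _ => hdm a)).mp (hPm.trans hP.symm) a (mem_univ a)
    have hzero : ∀ a, μ a - ν a = 0 := fun a => by rw [hsplit a, hdp0 a, hdm0 a]; ring
    have hz : ∀ b : B, |∑ a, (μ a - ν a) * K a b| = 0 := fun b => by
      rw [Finset.sum_eq_zero fun a _ => by rw [hzero a]; ring, abs_zero]
    rw [Finset.sum_congr rfl fun b _ => hz b]
    simp [← hP]
  · have key : ∀ b, ∑ a, (μ a - ν a) * K a b
        = (1/P) * ∑ a, ∑ a', dp a * dm a' * (K a b - K a' b) := by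
      intro b
      have inner : ∀ a, ∑ a', dp a * dm a' * (K a b - K a' b)
          = dp a * K a b * (∑ a', dm a') - dp a * ∑ a', dm a' * K a' b := by
        intro a
        rw [Finset.mul_sum, Finset.mul_sum, ← Finset.sum_sub_distrib]
        exact Finset.sum_congr rfl fun a' _ => by ring
      rw [Finset.sum_congr rfl fun a _ => inner a, Finset.sum_sub_distrib, hPm]
      rw [← Finset.sum_mul, ← Finset.sum_mul, ← hP_def]
      have hd : ∑ a, (μ a - ν a) * K a b = (∑ a, dp a * K a b) - ∑ a, dm a * K a b := by
        rw [← Finset.sum_sub_distrib]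
        exact Finset.sum_congr rfl fun a _ => by rw [hsplit a]; ring
      rw [hd]
      field_simp
    have keybound : ∀ b, |∑ a, (μ a - ν a) * K a b|
        ≤ (1/P) * ∑ a, ∑ a', dp a * dm a' * |K a b - K a' b| := by
      intro b
      rw [key b, abs_mul, abs_of_nonneg (by positivity : (0:ℝ) ≤ 1/P)]
      refine mul_le_mul_of_nonneg_left ?_ (by positivity)
      refine (Finset.abs_sum_le_sum_abs _ _).trans ?_
      refine Finset.sum_le_sum fun a _ => ?_
      refine (Finset.abs_sum_le_sum_abs _ _).trans ?_
      refine Finset.sum_le_sum fun a' _ => le_of_eq ?_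
      rw [abs_mul, abs_of_nonneg (mul_nonneg (hdp a) (hdm a'))]
    calc (1/2) * ∑ b, |∑ a, (μ a - ν a) * K a b|
        ≤ (1/2) * ∑ b, ((1/P) * ∑ a, ∑ a', dp a * dm a' * |K a b - K a' b|) := by
          refine mul_le_mul_of_nonneg_left (Finset.sum_le_sum fun b _ => keybound b)
            (by norm_num)
      _ = (1/(2*P)) * ∑ a, ∑ a', ∑ b, dp a * dm a' * |K a b - K a' b| := by
          rw [← Finset.mul_sum]
          rw [show ∑ b, ∑ a, ∑ a', dp a * dm a' * |K a b - K a' b|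
              = ∑ a, ∑ a', ∑ b, dp a * dm a' * |K a b - K a' b| from
            (Finset.sum_comm).trans (Finset.sum_congr rfl fun a _ => Finset.sum_comm)]
          ring
      _ = (1/(2*P)) * ∑ a, ∑ a', dp a * dm a' * ∑ b, |K a b - K a' b| := by
          refine congrArg _ (Finset.sum_congr rfl fun a _ => Finset.sum_congr rfl
            fun a' _ => ?_)
          rw [Finset.mul_sum]
      _ ≤ (1/(2*P)) * ∑ a, ∑ a', dp a * dm a' * (2*θ) := by
          refine mul_le_mul_of_nonneg_left ?_ (by positivity)
          refine Finset.sum_le_sum fun a _ => Finset.sum_le_sum fun a' _ => ?_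
          refine mul_le_mul_of_nonneg_left ?_ (mul_nonneg (hdp a) (hdm a'))
          have := hθ a a'
          linarith
      _ = θ * P := by
          have inner2 : ∀ a, ∑ a', dp a * dm a' * (2*θ) = dp a * (2*θ) * P := by
            intro a
            simp only [show ∀ a', dp a * dm a' * (2*θ) = dm a' * (dp a * (2*θ)) from fun a' => by ring]
            rw [← Finset.sum_mul, hPm]
            ring
          rw [Finset.sum_congr rfl fun a _ => inner2 a]
          simp only [show ∀ a, dp a * (2*θ) * P = dp a * ((2*θ) * P) from fun a => by ring]
          rw [← Finset.sum_mul, ← hP_def]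
          field_simp


section Main
variable {n : ℕ} {S : Type*} [Fintype S] [Nonempty S]
variable {par : Fin n → Fin n} {dep : Fin n → ℕ}

lemma dep_mono (hbfs : ∀ u v : Fin n, dep u < dep v → u < v) {u v : Fin n} (h : u ≤ v) :
    dep u ≤ dep v :=
  le_of_not_gt fun hd => absurd (hbfs v u hd) (not_lt.mpr h)

lemma desc_le (hpar : ∀ v : Fin n, (v : ℕ) ≠ 0 → par v < v ∧ dep v = dep (par v) + 1)
    {i v : Fin n} (h : desc par i v) : i ≤ v := by
  induction h with
  | refl => exact le_refl i
  | tail hab hbc ih =>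
      rename_i b c
      have hlt : par c < c := (hpar c hbc.1).1
      rw [hbc.2] at hlt
      exact ih.trans hlt.le

lemma desc_dep (hpar : ∀ v : Fin n, (v : ℕ) ≠ 0 → par v < v ∧ dep v = dep (par v) + 1)
    {i v : Fin n} (h : desc par i v) : dep i ≤ dep v := by
  induction h with
  | refl => exact le_refl _
  | tail hab hbc ih =>
      rename_i b c
      have hd : dep c = dep (par c) + 1 := (hpar c hbc.1).2
      rw [hbc.2] at hd
      omega

lemma desc_eq (hpar : ∀ v : Fin n, (v : ℕ) ≠ 0 → par v < v ∧ dep v = dep (par v) + 1)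
    {i v : Fin n} (h : desc par i v) (hd : dep v ≤ dep i) : v = i := by
  cases h with
  | refl => rfl
  | tail hab hbc =>
      rename_i b
      exfalso
      have h1 : dep v = dep (par v) + 1 := (hpar _ hbc.1).2
      rw [hbc.2] at h1
      have h2 : dep i ≤ dep b := desc_dep hpar hab
      omega

lemma desc_of_ne (hpar : ∀ v : Fin n, (v : ℕ) ≠ 0 → par v < v ∧ dep v = dep (par v) + 1)
    {i v : Fin n} (h : desc par i v) (hne : v ≠ i) :
    desc par i (par v) ∧ (v : ℕ) ≠ 0 := by
  rcases Relation.ReflTransGen.cases_tail h with h' | ⟨c, hc, hr⟩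
  · exact absurd h' hne
  · refine ⟨?_, hr.1⟩
    rw [hr.2]
    exact hc

end Main

section Chain
variable {n : ℕ} {S : Type*} [Fintype S] [Nonempty S]
variable (par : Fin n → Fin n) (dep : Fin n → ℕ) (p : Fin n → S → S → ℝ)
variable (i j : Fin n) (s0 : S)

/-- one-level kernel: resample the descendants of `i` at depth `d`, pin everything else -/
noncomputable def Kk (d : ℕ) (x z : Fin n → S) : ℝ :=
  ∏ v, if desc par i v ∧ dep v = d then p v (z v) (x (par v)) else ind (z v = s0)

/-- the law of the depth-`dep i + t` slice of descendants of `i`, all other coordinates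
pinned to `s0` -/
noncomputable def mu (y : Fin n → S) : ℕ → (Fin n → S) → ℝ
  | 0 => fun z => ind (z = fun v => if v = i then y i else s0)
  | (t+1) => fun z => ∑ x, mu y t x * Kk par dep p i s0 (dep i + t + 1) x z

/-- coordinates not yet sampled at stage `d`. -/
def Evp (d : ℕ) (v : Fin n) : Prop := i < v ∧ ¬(desc par i v ∧ dep v ≤ d)

/-- pinned values at stage `d`, with frontier values `z` -/
noncomputable def ggf (y : Fin n → S) (d : ℕ) (z : Fin n → S) : Fin n → S :=
  fun v => if v < i then y v else if desc par i v ∧ dep v = d then z v else s0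

/-- the conditional law of the output coordinates given the frontier `z` at stage `d` -/
noncomputable def Rr (y : Fin n → S) (d : ℕ) (z : Fin n → S)
    (s : {v : Fin n // j ≤ v} → S) : ℝ :=
  ∑ x : Fin n → S,
    (ind (∀ v, ¬ Evp par dep i d v → x v = ggf par dep i s0 y d z v)
      * ind (∀ v : {v : Fin n // j ≤ v}, x v.1 = s v))
    * ∏ v ∈ univ.filter (Evp par dep i d), p v (x v) (x (par v))

variable {par dep p}

/-- telescoping: summing the transition products over free coordinates gives 1 -/
lemma tel (hpar : ∀ v : Fin n, (v : ℕ) ≠ 0 → par v < v ∧ dep v = dep (par v) + 1)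
    (hp1 : ∀ v : Fin n, (v : ℕ) ≠ 0 → ∀ b, ∑ a, p v a b = 1)
    (E : Finset (Fin n)) (hE : ∀ v ∈ E, (v : ℕ) ≠ 0) (g : Fin n → S) :
    ∑ x : Fin n → S, ind (∀ v, v ∉ E → x v = g v)
      * ∏ v ∈ E, p v (x v) (x (par v)) = 1 := by
  induction E using Finset.strongInduction with
  | _ E ih =>
    rcases eq_or_ne E ∅ with rfl | hne
    · have hcond : ∀ x : Fin n → S,
          ((∀ v, v ∉ (∅ : Finset (Fin n)) → x v = g v)) ↔ (x = g) :=
        fun x => ⟨fun h => funext fun v => h v (notMem_empty v), fun h v _ => by rw [h]⟩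
      rw [Finset.sum_congr rfl fun x _ => by
        rw [ind_congr (hcond x), Finset.prod_empty, mul_one]]
      have : ∀ x : Fin n → S, ind (x = g) = if x = g then (1:ℝ) else 0 := fun x => by
        by_cases h : x = g <;> simp [ind, h]
      rw [Finset.sum_congr rfl fun x _ => this x]
      exact Fintype.sum_ite_eq' g fun _ => (1:ℝ)
    · have hEne : E.Nonempty := nonempty_iff_ne_empty.mpr hne
      set m := E.max' hEne with hm_def
      have hmE : m ∈ E := E.max'_mem hEne
      have hm0 : (m : ℕ) ≠ 0 := hE m hmE
      have hparm : par m ≠ m := ne_of_lt (hpar m hm0).1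
      have hsummand : ∀ x : Fin n → S,
          ind (∀ v, v ∉ E → x v = g v) * ∏ v ∈ E, p v (x v) (x (par v))
          = ind (∀ v, v ∉ E → x v = g v) *
              ((fun (a : S) (x : Fin n → S) =>
                p m a (x (par m)) * ∏ v ∈ E.erase m, p v (x v) (x (par v))) (x m) x) := by
        intro x
        dsimp only
        rw [← Finset.mul_prod_erase E (fun v => p v (x v) (x (par v))) hmE]
      have hP : ∀ (x : Fin n → S) (a : S),
          ((∀ v, v ∉ E → Function.update x m a v = g v)) ↔ (∀ v, v ∉ E → x v = g v) := by
        intro x a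
        constructor
        · intro h v hv
          have := h v hv
          rwa [Function.update_of_ne (fun h' : v = m => hv (by rw [h']; exact hmE)) a x]
            at this
        · intro h v hv
          rw [Function.update_of_ne (fun h' : v = m => hv (by rw [h']; exact hmE)) a x]
          exact h v hv
      have hq : ∀ (x : Fin n → S) (a b : S),
          (fun (a : S) (x : Fin n → S) =>
              p m a (x (par m)) * ∏ v ∈ E.erase m, p v (x v) (x (par v))) a
            (Function.update x m b)
          = (fun (a : S) (x : Fin n → S) =>
              p m a (x (par m)) * ∏ v ∈ E.erase m, p v (x v) (x (par v))) a x := by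
        intro x a b
        dsimp only
        rw [Function.update_of_ne hparm b x]
        congr 1
        refine Finset.prod_congr rfl fun v hv => ?_
        have hvm : v ≠ m := (Finset.mem_erase.mp hv).1
        have hpvm : par v ≠ m := by
          intro h'
          have h1 : par v < v := (hpar v (hE v (Finset.mem_of_mem_erase hv))).1
          have h2 : v ≤ m := E.le_max' v (Finset.mem_of_mem_erase hv)
          rw [h'] at h1
          exact absurd (lt_of_lt_of_le h1 h2) (lt_irrefl m)
        rw [Function.update_of_ne hvm b x, Function.update_of_ne hpvm b x]
      have marg := sum_marg m (g m) (fun x : Fin n → S => ∀ v, v ∉ E → x v = g v) hP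
        (fun (a : S) (x : Fin n → S) =>
          p m a (x (par m)) * ∏ v ∈ E.erase m, p v (x v) (x (par v))) hq
      refine Eq.trans (Finset.sum_congr rfl fun x _ => hsummand x) (Eq.trans marg ?_)
      have hcond : ∀ x : Fin n → S,
          ((∀ v, v ∉ E → x v = g v) ∧ x m = g m) ↔ (∀ v, v ∉ E.erase m → x v = g v) := by
        intro x
        refine ⟨fun ⟨h1, h2⟩ v hv => ?_, fun h => ⟨fun v hv => ?_, ?_⟩⟩
        · rcases eq_or_ne v m with rfl | hvm
          · exact h2
          · exact h1 v fun hvE => hv (Finset.mem_erase.mpr ⟨hvm, hvE⟩)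
        · exact h v fun h' => hv (Finset.mem_of_mem_erase h')
        · exact h m (fun h' => (Finset.mem_erase.mp h').1 rfl)
      have hsum_a : ∀ x : Fin n → S,
          (∑ a, p m a (x (par m)) * ∏ v ∈ E.erase m, p v (x v) (x (par v)))
          = ∏ v ∈ E.erase m, p v (x v) (x (par v)) := by
        intro x
        rw [← Finset.sum_mul, hp1 m hm0, one_mul]
      calc ∑ x : Fin n → S, ind ((∀ v, v ∉ E → x v = g v) ∧ x m = g m)
              * (∑ a, p m a (x (par m)) * ∏ v ∈ E.erase m, p v (x v) (x (par v)))
          = ∑ x : Fin n → S, ind (∀ v, v ∉ E.erase m → x v = g v)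
            * ∏ v ∈ E.erase m, p v (x v) (x (par v)) := by
            refine Finset.sum_congr rfl fun x _ => ?_
            rw [ind_congr (hcond x), hsum_a x]
        _ = 1 := ih (E.erase m) (Finset.erase_ssubset hmE)
              (fun v hv => hE v (Finset.mem_of_mem_erase hv))

variable {i j s0}

lemma sum_ind_eq_one (c : S) : ∑ a : S, ind (a = c) = 1 := by
  have h : ∀ a : S, ind (a = c) = if a = c then (1:ℝ) else 0 := fun a => by
    by_cases hc : a = c <;> simp [ind, hc]
  rw [Finset.sum_congr rfl fun a _ => h a]
  exact Fintype.sum_ite_eq' c fun _ => (1:ℝ)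

lemma sum_ind_fun_eq_one {ι : Type*} [DecidableEq ι] [Fintype ι] (c : ι → S) :
    ∑ z : ι → S, ind (z = c) = 1 := by
  have h : ∀ z : ι → S, ind (z = c) = if z = c then (1:ℝ) else 0 := fun z => by
    by_cases hc : z = c <;> simp [ind, hc]
  rw [Finset.sum_congr rfl fun z _ => h z]
  exact Fintype.sum_ite_eq' c fun _ => (1:ℝ)

lemma Kk_row_sum (hroot : ∀ v : Fin n, (v : ℕ) = 0 → dep v = 0)
    (hp1 : ∀ v : Fin n, (v : ℕ) ≠ 0 → ∀ b, ∑ a, p v a b = 1)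
    {d : ℕ} (hd : d ≠ 0) (x : Fin n → S) :
    ∑ z : Fin n → S, Kk par dep p i s0 d x z = 1 := by
  have hform := sum_prod_fn (S := S) (fun (v : Fin n) (a : S) =>
    if desc par i v ∧ dep v = d then p v a (x (par v)) else ind (a = s0))
  simp only [Kk]
  refine Eq.trans hform ?_
  refine Finset.prod_eq_one fun v _ => ?_
  by_cases hc : desc par i v ∧ dep v = d
  · simp only [if_pos hc]
    have hv0 : (v : ℕ) ≠ 0 := fun h0 => hd (hc.2 ▸ hroot v h0)
    exact hp1 v hv0 _
  · simp only [if_neg hc]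
    exact sum_ind_eq_one s0

lemma mu_sum (hroot : ∀ v : Fin n, (v : ℕ) = 0 → dep v = 0)
    (hp1 : ∀ v : Fin n, (v : ℕ) ≠ 0 → ∀ b, ∑ a, p v a b = 1)
    (y : Fin n → S) : ∀ t, ∑ z : Fin n → S, mu par dep p i s0 y t z = 1 := by
  intro t
  induction t with
  | zero => exact sum_ind_fun_eq_one _
  | succ t ih =>
      simp only [mu]
      rw [Finset.sum_comm]
      have hrow : ∀ x : Fin n → S,
          ∑ z : Fin n → S, mu par dep p i s0 y t x * Kk par dep p i s0 (dep i + t + 1) x z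
          = mu par dep p i s0 y t x := by
        intro x
        rw [← Finset.mul_sum, Kk_row_sum hroot hp1 (Nat.succ_ne_zero _) x, mul_one]
      rw [Finset.sum_congr rfl fun x _ => hrow x]
      exact ih

lemma alphaOn_eq {ι : Type*} (s : Finset ι) (f : ι → ℝ) :
    alphaOn s f = 1 - ∏ v ∈ s, (1 - f v) := by
  classical
  induction s using Finset.induction_on with
  | empty => simp [alphaOn]
  | insert _ _ ha ih =>
      rename_i a s
      rw [alphaOn, Finset.fold_insert ha, Finset.prod_insert ha]
      have : Finset.fold opA 0 f s = alphaOn s f := rfl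
      rw [this, ih, opA]
      ring

lemma theta_nonneg (v : Fin n) : 0 ≤ thetaCoef p v := by
  have b : S := Classical.arbitrary S
  have h := Finset.le_sup' (α := ℝ)
    (fun bb' : S × S => (1/2) * ∑ a, |p v a bb'.1 - p v a bb'.2|) (mem_univ (b, b))
  simp only [show (b,b).1 = b from rfl, show (b,b).2 = b from rfl, sub_self, abs_zero,
    Finset.sum_const_zero, mul_zero] at h
  exact h

lemma theta_le_one
    (hp0 : ∀ v : Fin n, (v : ℕ) ≠ 0 → ∀ b a, 0 ≤ p v a b)
    (hp1 : ∀ v : Fin n, (v : ℕ) ≠ 0 → ∀ b, ∑ a, p v a b = 1)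
    {v : Fin n} (hv : (v : ℕ) ≠ 0) : thetaCoef p v ≤ 1 := by
  refine Finset.sup'_le _ _ fun bb' _ => ?_
  have habs : ∀ a, |p v a bb'.1 - p v a bb'.2| ≤ p v a bb'.1 + p v a bb'.2 := by
    intro a
    refine (abs_sub _ _).trans ?_
    rw [abs_of_nonneg (hp0 v hv _ a), abs_of_nonneg (hp0 v hv _ a)]
  have hsum : ∑ a, |p v a bb'.1 - p v a bb'.2| ≤ 2 := by
    refine (Finset.sum_le_sum fun a _ => habs a).trans ?_
    rw [Finset.sum_add_distrib, hp1 v hv, hp1 v hv]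
    norm_num
  linarith

lemma theta_rowtv {v : Fin n} (b b' : S) :
    (1/2) * ∑ a, |p v a b - p v a b'| ≤ thetaCoef p v :=
  Finset.le_sup' (fun bb' : S × S => (1/2) * ∑ a, |p v a bb'.1 - p v a bb'.2|)
    (mem_univ (b, b'))

lemma Kk_rowtv (hroot : ∀ v : Fin n, (v : ℕ) = 0 → dep v = 0)
    (hp0 : ∀ v : Fin n, (v : ℕ) ≠ 0 → ∀ b a, 0 ≤ p v a b)
    (hp1 : ∀ v : Fin n, (v : ℕ) ≠ 0 → ∀ b, ∑ a, p v a b = 1)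
    {d : ℕ} (hd : d ≠ 0) (x x' : Fin n → S) :
    (1/2) * ∑ z : Fin n → S, |Kk par dep p i s0 d x z - Kk par dep p i s0 d x' z|
      ≤ alphaOn (Finset.univ.filter fun v : Fin n => dep v = d) (thetaCoef p) := by
  have hv0 : ∀ v : Fin n, dep v = d → (v : ℕ) ≠ 0 := fun v hdep h0 => hd (hdep ▸ hroot v h0)
  set F := fun (v : Fin n) (a : S) =>
    if desc par i v ∧ dep v = d then p v a (x (par v)) else ind (a = s0) with hF_def
  set F' := fun (v : Fin n) (a : S) =>
    if desc par i v ∧ dep v = d then p v a (x' (par v)) else ind (a = s0) with hF'_def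
  have hFnn : ∀ v a, 0 ≤ F v a := by
    intro v a
    rw [hF_def]
    dsimp only
    by_cases hc : desc par i v ∧ dep v = d
    · rw [if_pos hc]; exact hp0 v (hv0 v hc.2) _ a
    · rw [if_neg hc]; exact ind_nonneg _
  have hF'nn : ∀ v a, 0 ≤ F' v a := by
    intro v a
    rw [hF'_def]
    dsimp only
    by_cases hc : desc par i v ∧ dep v = d
    · rw [if_pos hc]; exact hp0 v (hv0 v hc.2) _ a
    · rw [if_neg hc]; exact ind_nonneg _
  rw [tv_min _ _ (Kk_row_sum hroot hp1 hd x) (Kk_row_sum hroot hp1 hd x'),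
    alphaOn_eq]
  have hmain : ∏ v ∈ Finset.univ.filter (fun v : Fin n => dep v = d), (1 - thetaCoef p v)
      ≤ ∑ z : Fin n → S, min (Kk par dep p i s0 d x z) (Kk par dep p i s0 d x' z) := by
    have hKF : ∀ z : Fin n → S, Kk par dep p i s0 d x z = ∏ v, F v (z v) := fun z => rfl
    have hKF' : ∀ z : Fin n → S, Kk par dep p i s0 d x' z = ∏ v, F' v (z v) := fun z => rfl
    have step1 : ∑ z : Fin n → S, ∏ v, min (F v (z v)) (F' v (z v))
        ≤ ∑ z : Fin n → S, min (Kk par dep p i s0 d x z) (Kk par dep p i s0 d x' z) := by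
      refine Finset.sum_le_sum fun z _ => ?_
      rw [hKF z, hKF' z]
      exact prod_min_le _ _ (fun v => hFnn v (z v)) (fun v => hF'nn v (z v))
    refine le_trans ?_ step1
    have step2 := sum_prod_fn (S := S) (fun (v : Fin n) (a : S) => min (F v a) (F' v a))
    rw [step2]
    have hfac : ∀ v : Fin n, (if dep v = d then 1 - thetaCoef p v else 1)
        ≤ ∑ a, min (F v a) (F' v a) ∧
        (0:ℝ) ≤ (if dep v = d then 1 - thetaCoef p v else 1) := by
      intro v
      constructor
      · by_cases hdep : dep v = d
        · rw [if_pos hdep]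
          by_cases hc : desc par i v ∧ dep v = d
          · have hmin : ∑ a, min (F v a) (F' v a)
                = 1 - (1/2) * ∑ a, |p v a (x (par v)) - p v a (x' (par v))| := by
              have := tv_min (fun a => p v a (x (par v))) (fun a => p v a (x' (par v)))
                (hp1 v (hv0 v hdep) _) (hp1 v (hv0 v hdep) _)
              rw [hF_def, hF'_def]
              simp only [if_pos hc]
              linarith
            rw [hmin]
            have := theta_rowtv (p := p) (v := v) (x (par v)) (x' (par v))
            linarith
          · have heq : ∀ a, min (F v a) (F' v a) = ind (a = s0) := by
              intro a
              rw [hF_def, hF'_def]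
              simp only [if_neg hc, min_self]
            rw [Finset.sum_congr rfl fun a _ => heq a, sum_ind_eq_one]
            have := theta_nonneg (p := p) v
            linarith
        · rw [if_neg hdep]
          have heq : ∀ a, min (F v a) (F' v a) = ind (a = s0) := by
            intro a
            rw [hF_def, hF'_def]
            have hc : ¬ (desc par i v ∧ dep v = d) := fun hc => hdep hc.2
            simp only [if_neg hc, min_self]
          rw [Finset.sum_congr rfl fun a _ => heq a, sum_ind_eq_one]
      · by_cases hdep : dep v = d
        · rw [if_pos hdep]
          have := theta_le_one hp0 hp1 (hv0 v hdep)
          linarith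
        · rw [if_neg hdep]; norm_num
    calc ∏ v ∈ Finset.univ.filter (fun v : Fin n => dep v = d), (1 - thetaCoef p v)
        = ∏ v : Fin n, (if dep v = d then 1 - thetaCoef p v else 1) :=
          Finset.prod_filter _ _
      _ ≤ ∏ v : Fin n, ∑ a, min (F v a) (F' v a) :=
          Finset.prod_le_prod (fun v _ => (hfac v).2) (fun v _ => (hfac v).1)
  linarith

lemma alphaOn_nonneg
    (hp0 : ∀ v : Fin n, (v : ℕ) ≠ 0 → ∀ b a, 0 ≤ p v a b)
    (hp1 : ∀ v : Fin n, (v : ℕ) ≠ 0 → ∀ b, ∑ a, p v a b = 1)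
    (hroot : ∀ v : Fin n, (v : ℕ) = 0 → dep v = 0) {d : ℕ} (hd : d ≠ 0) :
    0 ≤ alphaOn (Finset.univ.filter fun v : Fin n => dep v = d) (thetaCoef p) := by
  rw [alphaOn_eq]
  have h1 : ∏ v ∈ Finset.univ.filter (fun v : Fin n => dep v = d), (1 - thetaCoef p v) ≤ 1 := by
    refine Finset.prod_le_one (fun v hv => ?_) (fun v hv => ?_)
    · have hdep : dep v = d := (Finset.mem_filter.mp hv).2
      have := theta_le_one hp0 hp1 (fun h0 => hd (hdep ▸ hroot v h0))
      linarith
    · have := theta_nonneg (p := p) v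
      linarith
  linarith

lemma mu_tv (hroot : ∀ v : Fin n, (v : ℕ) = 0 → dep v = 0)
    (hp0 : ∀ v : Fin n, (v : ℕ) ≠ 0 → ∀ b a, 0 ≤ p v a b)
    (hp1 : ∀ v : Fin n, (v : ℕ) ≠ 0 → ∀ b, ∑ a, p v a b = 1)
    (y y' : Fin n → S) : ∀ t,
    (1/2) * ∑ z : Fin n → S, |mu par dep p i s0 y t z - mu par dep p i s0 y' t z|
      ≤ ∏ d ∈ Finset.Icc (dep i + 1) (dep i + t),
          alphaOn (Finset.univ.filter fun v : Fin n => dep v = d) (thetaCoef p) := by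
  intro t
  induction t with
  | zero =>
      rw [show Finset.Icc (dep i + 1) (dep i + 0) = ∅ from Finset.Icc_eq_empty (by omega)]
      rw [Finset.prod_empty]
      have hb : ∀ z : Fin n → S, |mu par dep p i s0 y 0 z - mu par dep p i s0 y' 0 z|
          ≤ mu par dep p i s0 y 0 z + mu par dep p i s0 y' 0 z := by
        intro z
        refine (abs_sub _ _).trans ?_
        simp only [mu]
        rw [abs_of_nonneg (ind_nonneg _), abs_of_nonneg (ind_nonneg _)]
      have := Finset.sum_le_sum fun z (_ : z ∈ (univ : Finset (Fin n → S))) => hb z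
      rw [Finset.sum_add_distrib, mu_sum hroot hp1 y 0, mu_sum hroot hp1 y' 0] at this
      linarith
  | succ t ih =>
      have hdiff : ∀ z : Fin n → S,
          mu par dep p i s0 y (t+1) z - mu par dep p i s0 y' (t+1) z
          = ∑ x, (mu par dep p i s0 y t x - mu par dep p i s0 y' t x)
              * Kk par dep p i s0 (dep i + t + 1) x z := by
        intro z
        simp only [mu]
        rw [← Finset.sum_sub_distrib]
        exact Finset.sum_congr rfl fun x _ => by ring
      rw [Finset.sum_congr rfl fun z (_ : z ∈ (univ : Finset (Fin n → S))) =>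
        congrArg abs (hdiff z)]
      have hdob := dobrushin (mu par dep p i s0 y t) (mu par dep p i s0 y' t)
        (Kk par dep p i s0 (dep i + t + 1))
        (alphaOn (Finset.univ.filter fun v : Fin n => dep v = (dep i + t + 1)) (thetaCoef p))
        (by rw [mu_sum hroot hp1 y t, mu_sum hroot hp1 y' t])
        (fun a a' => Kk_rowtv hroot hp0 hp1 (Nat.succ_ne_zero _) a a')
      refine hdob.trans ?_
      have hstep := mul_le_mul_of_nonneg_left ih
        (alphaOn_nonneg hp0 hp1 hroot (Nat.succ_ne_zero (dep i + t)))
      refine hstep.trans (le_of_eq ?_)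
      rw [show Finset.Icc (dep i + 1) (dep i + (t+1))
          = insert (dep i + t + 1) (Finset.Icc (dep i + 1) (dep i + t)) by
        ext u; simp [Finset.mem_Icc, Finset.mem_insert]; omega]
      rw [Finset.prod_insert (by simp)]


lemma sum_mul_ind (f : S → ℝ) (c : S) : ∑ a : S, f a * ind (c = a) = f c := by
  have h : ∀ a : S, f a * ind (c = a) = if a = c then f a else 0 := fun a => by
    rcases eq_or_ne a c with rfl | hc
    · rw [ind_pos rfl, mul_one, if_pos rfl]
    · rw [ind_neg (Ne.symm hc), mul_zero, if_neg hc]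
  rw [Finset.sum_congr rfl fun a _ => h a]
  exact Fintype.sum_ite_eq' c f

lemma Evp_nonzero {d : ℕ} {v : Fin n} (h : Evp par dep i d v) : (v : ℕ) ≠ 0 := by
  have : (i : ℕ) < (v : ℕ) := h.1
  omega

variable {y : Fin n → S}

lemma Rr_nonneg (hp0 : ∀ v : Fin n, (v : ℕ) ≠ 0 → ∀ b a, 0 ≤ p v a b)
    {d : ℕ} (z : Fin n → S) (s : {v : Fin n // j ≤ v} → S) :
    0 ≤ Rr par dep p i j s0 y d z s := by
  refine Finset.sum_nonneg fun x _ => mul_nonneg (mul_nonneg (ind_nonneg _) (ind_nonneg _))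
    (Finset.prod_nonneg fun v hv => ?_)
  exact hp0 v (Evp_nonzero (Finset.mem_filter.mp hv).2) _ _

lemma Rr_congr (hyy' : ∀ v, v < i → y v = y' v) {d : ℕ} (z : Fin n → S)
    (s : {v : Fin n // j ≤ v} → S) :
    Rr par dep p i j s0 y d z s = Rr par dep p i j s0 y' d z s := by
  have hg : ggf par dep i s0 y d z = ggf par dep i s0 y' d z := by
    funext v
    by_cases hv : v < i
    · simp only [ggf, if_pos hv, hyy' v hv]
    · simp only [ggf, if_neg hv]
  simp only [Rr, hg]

lemma Rr_sum (hpar : ∀ v : Fin n, (v : ℕ) ≠ 0 → par v < v ∧ dep v = dep (par v) + 1)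
    (hp1 : ∀ v : Fin n, (v : ℕ) ≠ 0 → ∀ b, ∑ a, p v a b = 1)
    {d : ℕ} (z : Fin n → S) :
    ∑ s : {v : Fin n // j ≤ v} → S, Rr par dep p i j s0 y d z s = 1 := by
  simp only [Rr]
  rw [Finset.sum_comm]
  have hinner : ∀ x : Fin n → S,
      ∑ s : {v : Fin n // j ≤ v} → S,
        (ind (∀ v, ¬ Evp par dep i d v → x v = ggf par dep i s0 y d z v)
          * ind (∀ v : {v : Fin n // j ≤ v}, x v.1 = s v))
        * ∏ v ∈ univ.filter (Evp par dep i d), p v (x v) (x (par v))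
      = ind (∀ v, ¬ Evp par dep i d v → x v = ggf par dep i s0 y d z v)
        * ∏ v ∈ univ.filter (Evp par dep i d), p v (x v) (x (par v)) := by
    intro x
    have hs : ∀ s : {v : Fin n // j ≤ v} → S,
        (∀ v : {v : Fin n // j ≤ v}, x v.1 = s v) ↔ (s = fun v => x v.1) :=
      fun s => ⟨fun h => funext fun v => (h v).symm, fun h v => by rw [h]⟩
    calc ∑ s : {v : Fin n // j ≤ v} → S,
        (ind (∀ v, ¬ Evp par dep i d v → x v = ggf par dep i s0 y d z v)
          * ind (∀ v : {v : Fin n // j ≤ v}, x v.1 = s v))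
        * ∏ v ∈ univ.filter (Evp par dep i d), p v (x v) (x (par v))
        = (ind (∀ v, ¬ Evp par dep i d v → x v = ggf par dep i s0 y d z v)
            * ∏ v ∈ univ.filter (Evp par dep i d), p v (x v) (x (par v)))
          * ∑ s : {v : Fin n // j ≤ v} → S, ind (s = fun v => x v.1) := by
          rw [Finset.mul_sum]
          refine Finset.sum_congr rfl fun s _ => ?_
          rw [ind_congr (hs s)]
          ring
      _ = _ := by rw [sum_ind_fun_eq_one, mul_one]
  rw [Finset.sum_congr rfl fun x _ => hinner x]
  have hpin : ∀ x : Fin n → S,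
      (∀ v, ¬ Evp par dep i d v → x v = ggf par dep i s0 y d z v)
      ↔ (∀ v, v ∉ univ.filter (Evp par dep i d) → x v = ggf par dep i s0 y d z v) := by
    intro x
    constructor
    · intro h v hv
      exact h v fun hE => hv (Finset.mem_filter.mpr ⟨Finset.mem_univ v, hE⟩)
    · intro h v hv
      exact h v fun hmem => hv (Finset.mem_filter.mp hmem).2
  rw [Finset.sum_congr rfl fun x _ => by rw [ind_congr (hpin x)]]
  exact tel hpar hp1 _ (fun v hv => Evp_nonzero (Finset.mem_filter.mp hv).2) _

/-- ¬Evp at stage `dep i` is just `v ≤ i` -/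
lemma not_Evp_depi (hpar : ∀ v : Fin n, (v : ℕ) ≠ 0 → par v < v ∧ dep v = dep (par v) + 1)
    (v : Fin n) : ¬ Evp par dep i (dep i) v ↔ v ≤ i := by
  constructor
  · intro h
    by_contra hle
    have hiv : i < v := lt_of_not_ge hle
    refine h ⟨hiv, fun hc => ?_⟩
    have := desc_eq hpar hc.1 hc.2
    rw [this] at hiv
    exact lt_irrefl i hiv
  · intro hle hE
    exact absurd hE.1 (not_lt.mpr hle)

lemma sum_ind_fun_mul {ι : Type*} [DecidableEq ι] [Fintype ι] (c : ι → S)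
    (G : (ι → S) → ℝ) : ∑ z : ι → S, ind (z = c) * G z = G c := by
  have h : ∀ z : ι → S, ind (z = c) * G z = if z = c then G z else 0 := fun z => by
    by_cases hc : z = c <;> simp [ind, hc]
  rw [Finset.sum_congr rfl fun z _ => h z]
  exact Fintype.sum_ite_eq' c G

lemma star_base (hpar : ∀ v : Fin n, (v : ℕ) ≠ 0 → par v < v ∧ dep v = dep (par v) + 1)
    (hij : i < j) (s : {v : Fin n // j ≤ v} → S) :
    condP par p i j y s
      = ∑ z : Fin n → S, mu par dep p i s0 y 0 z * Rr par dep p i j s0 y (dep i) z s := by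
  simp only [mu]
  rw [sum_ind_fun_mul]
  -- now: condP = Rr at stage dep i with frontier g0
  simp only [condP, Rr]
  rw [Finset.sum_filter]
  have hset : univ.filter (fun v : Fin n => i < v) = univ.filter (Evp par dep i (dep i)) := by
    refine Finset.filter_congr fun v _ => ?_
    constructor
    · intro hv
      refine ⟨hv, fun hc => ?_⟩
      have := desc_eq hpar hc.1 hc.2
      rw [this] at hv
      exact lt_irrefl i hv
    · exact fun h => h.1
  refine Finset.sum_congr rfl fun x _ => ?_
  rw [← hset]
  rw [ite_eq_ind_mul]
  congr 1
  rw [← ind_and]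
  refine ind_congr ?_
  constructor
  · rintro ⟨h1, h2⟩
    refine ⟨fun v hv => ?_, h2⟩
    have hvi : v ≤ i := (not_Evp_depi hpar v).mp hv
    rw [h1 v hvi]
    rcases lt_or_eq_of_le hvi with hlt | rfl
    · simp only [ggf, if_pos hlt]
    · simp [ggf, show desc par v v from Relation.ReflTransGen.refl]
  · rintro ⟨h1, h2⟩
    refine ⟨fun v hv => ?_, h2⟩
    have := h1 v ((not_Evp_depi hpar v).mpr hv)
    rw [this]
    rcases lt_or_eq_of_le hv with hlt | rfl
    · simp only [ggf, if_pos hlt]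
    · simp [ggf, show desc par v v from Relation.ReflTransGen.refl]

lemma ind_mul_congr {P : Prop} {a b : ℝ} (h : P → a = b) : ind P * a = ind P * b := by
  by_cases hP : P
  · rw [h hP]
  · rw [ind_neg hP, zero_mul, zero_mul]

lemma not_Evp_iff {d : ℕ} (v : Fin n) :
    ¬ Evp par dep i d v ↔ v ≤ i ∨ (desc par i v ∧ dep v ≤ d) := by
  rw [Evp, not_and_or, not_not, not_lt]

lemma Evp_mono {d : ℕ} {v : Fin n} (h : Evp par dep i (d+1) v) : Evp par dep i d v :=
  ⟨h.1, fun hc => h.2 ⟨hc.1, hc.2.trans (Nat.le_succ d)⟩⟩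

lemma Evp_succ_decomp (hbfs : ∀ u v : Fin n, dep u < dep v → u < v)
    {d : ℕ} (hdi : dep i ≤ d) (v : Fin n) :
    Evp par dep i d v ↔ ((desc par i v ∧ dep v = d + 1) ∨ Evp par dep i (d+1) v) := by
  constructor
  · rintro ⟨hiv, hnot⟩
    by_cases hdesc : desc par i v
    · have hgt : ¬ dep v ≤ d := fun h => hnot ⟨hdesc, h⟩
      rcases eq_or_ne (dep v) (d+1) with hd1 | hd1
      · exact Or.inl ⟨hdesc, hd1⟩
      · exact Or.inr ⟨hiv, fun hc => by omega⟩
    · exact Or.inr ⟨hiv, fun hc => hdesc hc.1⟩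
  · rintro (⟨hdesc, hdep⟩ | hE)
    · refine ⟨hbfs i v (by omega), fun hc => by omega⟩
    · exact Evp_mono hE

lemma A'_Evp (hbfs : ∀ u v : Fin n, dep u < dep v → u < v)
    {d : ℕ} (hdi : dep i ≤ d) {v : Fin n} (h : desc par i v ∧ dep v = d + 1) :
    Evp par dep i d v := (Evp_succ_decomp hbfs hdi v).mpr (Or.inl h)

lemma star_key (hpar : ∀ v : Fin n, (v : ℕ) ≠ 0 → par v < v ∧ dep v = dep (par v) + 1)
    (hbfs : ∀ u v : Fin n, dep u < dep v → u < v)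
    (hij : i < j) {d : ℕ} (hdi : dep i ≤ d)
    (hdj : ∀ v : Fin n, desc par i v → j ≤ v → dep v ≠ d)
    (x : Fin n → S) (s : {v : Fin n // j ≤ v} → S) :
    ∑ z : Fin n → S, Kk par dep p i s0 (d+1) x z * Rr par dep p i j s0 y (d+1) z s
      = Rr par dep p i j s0 y d x s := by
  have hA'Evp : ∀ v : Fin n, desc par i v ∧ dep v = d + 1 → Evp par dep i d v :=
    fun v h => A'_Evp hbfs hdi h
  have gval1 : ∀ (z : Fin n → S) (v : Fin n), desc par i v ∧ dep v = d + 1 →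
      ggf par dep i s0 y (d+1) z v = z v := by
    intro z v hv
    have hiv : i < v := (hA'Evp v hv).1
    simp only [ggf, if_neg (not_lt.mpr hiv.le), if_pos hv]
  have gval2 : ∀ (z : Fin n → S) (v : Fin n), ¬ Evp par dep i d v →
      ggf par dep i s0 y (d+1) z v = (if v < i then y v else s0) := by
    intro z v hv
    by_cases hvi : v < i
    · simp only [ggf, if_pos hvi]
    · have hA : ¬ (desc par i v ∧ dep v = d + 1) := fun hA => hv (hA'Evp v hA)
      simp only [ggf, if_neg hvi, if_neg hA]
  -- Step 1: split the stage-(d+1) pin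
  have hsplit : ∀ z w : Fin n → S,
      ind (∀ v, ¬ Evp par dep i (d+1) v → w v = ggf par dep i s0 y (d+1) z v)
      = ind (∀ v, ¬ Evp par dep i d v → w v = (if v < i then y v else s0))
        * ind (∀ v, desc par i v ∧ dep v = d + 1 → w v = z v) := by
    intro z w
    rw [← ind_and]
    refine ind_congr ⟨fun h => ⟨fun v hv => ?_, fun v hv => ?_⟩, fun h v hv => ?_⟩
    · have hv1 : ¬ Evp par dep i (d+1) v := fun hE => hv (Evp_mono hE)
      rw [h v hv1, gval2 z v hv]
    · have hv1 : ¬ Evp par dep i (d+1) v := fun hE => hE.2 ⟨hv.1, le_of_eq hv.2⟩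
      rw [h v hv1, gval1 z v hv]
    · by_cases hA : desc par i v ∧ dep v = d + 1
      · rw [h.2 v hA, gval1 z v hA]
      · have hvd : ¬ Evp par dep i d v := by
          intro hEd
          rcases (Evp_succ_decomp hbfs hdi v).mp hEd with h1 | h1
          · exact hA h1
          · exact hv h1
        rw [h.1 v hvd, gval2 z v hvd]
  -- Step 2: collapse the inner z-sum
  have hinner : ∀ w : Fin n → S,
      ∑ z : Fin n → S, Kk par dep p i s0 (d+1) x z
        * ind (∀ v, desc par i v ∧ dep v = d + 1 → w v = z v)
      = ∏ v ∈ univ.filter (fun v => desc par i v ∧ dep v = d + 1), p v (w v) (x (par v)) := by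
    intro w
    have h1 : ∀ z : Fin n → S, Kk par dep p i s0 (d+1) x z
        * ind (∀ v, desc par i v ∧ dep v = d + 1 → w v = z v)
        = ∏ v, ((if desc par i v ∧ dep v = d + 1 then p v (z v) (x (par v))
              else ind (z v = s0))
            * ind (desc par i v ∧ dep v = d + 1 → w v = z v)) := by
      intro z
      rw [ind_forall (fun v => desc par i v ∧ dep v = d + 1 → w v = z v)]
      simp only [Kk]
      rw [← Finset.prod_mul_distrib]
    have h2 := sum_prod_fn (S := S) (fun (v : Fin n) (a : S) =>
      (if desc par i v ∧ dep v = d + 1 then p v a (x (par v)) else ind (a = s0))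
        * ind (desc par i v ∧ dep v = d + 1 → w v = a))
    refine Eq.trans (Finset.sum_congr rfl fun z _ => h1 z) (Eq.trans h2 ?_)
    have h3 : ∀ v : Fin n,
        (∑ a, (if desc par i v ∧ dep v = d + 1 then p v a (x (par v)) else ind (a = s0))
          * ind (desc par i v ∧ dep v = d + 1 → w v = a))
        = (if desc par i v ∧ dep v = d + 1 then p v (w v) (x (par v)) else 1) := by
      intro v
      by_cases hA : desc par i v ∧ dep v = d + 1
      · simp only [if_pos hA]
        have hcong : ∀ a : S, ind (desc par i v ∧ dep v = d + 1 → w v = a)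
            = ind (w v = a) := fun a => ind_congr ⟨fun h => h hA, fun h _ => h⟩
        rw [Finset.sum_congr rfl fun a _ => by rw [hcong a]]
        exact sum_mul_ind (fun a => p v a (x (par v))) (w v)
      · simp only [if_neg hA]
        have hcong : ∀ a : S, ind (desc par i v ∧ dep v = d + 1 → w v = a) = 1 :=
          fun a => ind_pos (fun h => absurd h hA)
        rw [Finset.sum_congr rfl fun a _ => by rw [hcong a, mul_one]]
        exact sum_ind_eq_one s0
    rw [Finset.prod_congr rfl fun v _ => h3 v]
    exact (Finset.prod_filter _ _).symm
  -- Step 3: LHS assembly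
  have hLHS : ∑ z : Fin n → S, Kk par dep p i s0 (d+1) x z * Rr par dep p i j s0 y (d+1) z s
      = ∑ w : Fin n → S,
          ind (∀ v, ¬ Evp par dep i d v → w v = (if v < i then y v else s0)) *
          (ind (∀ v : {v : Fin n // j ≤ v}, w v.1 = s v)
            * (∏ v ∈ univ.filter (fun v => desc par i v ∧ dep v = d + 1), p v (w v) (x (par v)))
            * ∏ v ∈ univ.filter (Evp par dep i (d+1)), p v (w v) (w (par v))) := by
    simp only [Rr]
    rw [Finset.sum_congr rfl fun z _ => Finset.mul_sum _ _ _]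
    rw [Finset.sum_comm]
    refine Finset.sum_congr rfl fun w _ => ?_
    have hzsummand : ∀ z : Fin n → S,
        Kk par dep p i s0 (d+1) x z *
          ((ind (∀ v, ¬ Evp par dep i (d+1) v → w v = ggf par dep i s0 y (d+1) z v)
            * ind (∀ v : {v : Fin n // j ≤ v}, w v.1 = s v))
          * ∏ v ∈ univ.filter (Evp par dep i (d+1)), p v (w v) (w (par v)))
        = (ind (∀ v, ¬ Evp par dep i d v → w v = (if v < i then y v else s0))
            * (ind (∀ v : {v : Fin n // j ≤ v}, w v.1 = s v)
              * ∏ v ∈ univ.filter (Evp par dep i (d+1)), p v (w v) (w (par v))))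
          * (Kk par dep p i s0 (d+1) x z
              * ind (∀ v, desc par i v ∧ dep v = d + 1 → w v = z v)) := by
      intro z
      rw [hsplit z w]
      ring
    rw [Finset.sum_congr rfl fun z _ => hzsummand z, ← Finset.mul_sum, hinner w]
    rw [show ∀ (A B C E : ℝ), (A * (B * E)) * C = A * (B * C * E) from
      fun A B C E => by ring]
  rw [hLHS]
  -- Step 4: RHS split
  have hsetsplit : univ.filter (Evp par dep i d)
      = univ.filter (fun v => desc par i v ∧ dep v = d + 1)
        ∪ univ.filter (Evp par dep i (d+1)) := by
    ext v
    simp only [Finset.mem_union, Finset.mem_filter, Finset.mem_univ, true_and]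
    exact Evp_succ_decomp hbfs hdi v
  have hdisj : Disjoint (univ.filter (fun v : Fin n => desc par i v ∧ dep v = d + 1))
      (univ.filter (Evp par dep i (d+1))) := by
    rw [Finset.disjoint_left]
    intro a ha hb
    rw [Finset.mem_filter] at ha hb
    exact hb.2.2 ⟨ha.2.1, le_of_eq ha.2.2⟩
  have hRHS : Rr par dep p i j s0 y d x s
      = ∑ w : Fin n → S,
          ind (∀ v, ¬ Evp par dep i d v → w v = ggf par dep i s0 y d x v) *
          (ind (∀ v : {v : Fin n // j ≤ v}, w v.1 = s v)
            * (∏ v ∈ univ.filter (fun v => desc par i v ∧ dep v = d + 1), p v (w v) (x (par v)))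
            * ∏ v ∈ univ.filter (Evp par dep i (d+1)), p v (w v) (w (par v))) := by
    simp only [Rr]
    refine Finset.sum_congr rfl fun w _ => ?_
    rw [hsetsplit, Finset.prod_union hdisj]
    rw [show ∀ (a b c e : ℝ), (a * b) * (c * e) = a * (b * c * e) from fun a b c e => by ring]
    refine ind_mul_congr fun hpin => ?_
    refine congrArg₂ (· * ·) (congrArg₂ (· * ·) rfl ?_) rfl
    refine Finset.prod_congr rfl fun v hv => ?_
    rw [Finset.mem_filter] at hv
    have hA := hv.2
    have hiv : i < v := (hA'Evp v hA).1
    have hv0 : (v : ℕ) ≠ 0 := by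
      have : (i : ℕ) < (v : ℕ) := hiv
      omega
    have hdescp : desc par i (par v) := (desc_of_ne hpar hA.1 (ne_of_gt hiv)).1
    have hdeppar : dep (par v) = d := by
      have := (hpar v hv0).2
      omega
    have hnotE : ¬ Evp par dep i d (par v) := fun hE => hE.2 ⟨hdescp, le_of_eq hdeppar⟩
    have := hpin (par v) hnotE
    rw [this]
    have hpvi : ¬ (par v < i) := not_lt.mpr (desc_le hpar hdescp)
    simp only [ggf, if_neg hpvi]
    rw [if_pos (show desc par i (par v) ∧ dep (par v) = d from ⟨hdescp, hdeppar⟩)]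
  rw [hRHS]
  -- Step 5: override the pinned values on the old frontier
  refine sum_override (fun v => ¬ Evp par dep i d v) (fun v => if v < i then y v else s0)
    (ggf par dep i s0 y d x) _ ?_
  intro w w' hagree
  have hag : ∀ v : Fin n, Evp par dep i d v → w v = w' v :=
    fun v hv => hagree v (Or.inl (not_not_intro hv))
  have hagv : ∀ v : Fin n,
      (if v < i then y v else s0) = ggf par dep i s0 y d x v → w v = w' v :=
    fun v hv => hagree v (Or.inr hv)
  have hout : ∀ v : {v : Fin n // j ≤ v}, w v.1 = w' v.1 := by
    intro v
    by_cases hE : Evp par dep i d v.1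
    · exact hag v.1 hE
    · rcases (not_Evp_iff v.1).mp hE with hle | ⟨hdesc, hdep⟩
      · exact absurd (hij.trans_le v.2) (not_lt.mpr hle)
      · have hiv : i < v.1 := hij.trans_le v.2
        have hdep' : dep v.1 ≠ d := hdj v.1 hdesc v.2
        refine hagv v.1 ?_
        simp only [ggf, if_neg (not_lt.mpr hiv.le),
          if_neg (fun hc : desc par i v.1 ∧ dep v.1 = d => hdep' hc.2)]
  refine congrArg₂ (· * ·) (congrArg₂ (· * ·) ?_ ?_) ?_
  · exact ind_congr (forall_congr' fun v => by rw [hout v])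
  · refine Finset.prod_congr rfl fun v hv => ?_
    rw [Finset.mem_filter] at hv
    rw [hag v (hA'Evp v hv.2)]
  · refine Finset.prod_congr rfl fun v hv => ?_
    rw [Finset.mem_filter] at hv
    have hE1 := hv.2
    have hwv : w v = w' v := hag v (Evp_mono hE1)
    have hiv : i < v := hE1.1
    have hv0 : (v : ℕ) ≠ 0 := by
      have : (i : ℕ) < (v : ℕ) := hiv
      omega
    have hdepv : dep v = dep (par v) + 1 := (hpar v hv0).2
    have hwpv : w (par v) = w' (par v) := by
      by_cases hEp : Evp par dep i d (par v)
      · exact hag (par v) hEp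
      · rcases (not_Evp_iff (par v)).mp hEp with hle | ⟨hdescp, hdepp⟩
        · rcases lt_or_eq_of_le hle with hlt | heq
          · refine hagv (par v) ?_
            simp only [ggf, if_pos hlt]
          · exfalso
            have hdesc : desc par i v :=
              Relation.ReflTransGen.tail Relation.ReflTransGen.refl ⟨hv0, heq⟩
            have hdpi : dep (par v) = dep i := by rw [heq]
            exact hE1.2 ⟨hdesc, by omega⟩
        · rcases eq_or_ne (dep (par v)) d with hdd | hdd
          · exfalso
            have hdesc : desc par i v := Relation.ReflTransGen.tail hdescp ⟨hv0, rfl⟩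
            exact hE1.2 ⟨hdesc, by omega⟩
          · refine hagv (par v) ?_
            have hpvi : ¬ (par v < i) := not_lt.mpr (desc_le hpar hdescp)
            simp only [ggf, if_neg hpvi,
              if_neg (fun hc : desc par i (par v) ∧ dep (par v) = d => hdd hc.2)]
    rw [hwv, hwpv]

lemma star (hpar : ∀ v : Fin n, (v : ℕ) ≠ 0 → par v < v ∧ dep v = dep (par v) + 1)
    (hbfs : ∀ u v : Fin n, dep u < dep v → u < v)
    (hij : i < j) (s : {v : Fin n // j ≤ v} → S) :
    ∀ t, (∀ v : Fin n, desc par i v → j ≤ v → dep i + t ≤ dep v) →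
    condP par p i j y s
      = ∑ z : Fin n → S, mu par dep p i s0 y t z
          * Rr par dep p i j s0 y (dep i + t) z s := by
  intro t
  induction t with
  | zero => intro _; rw [Nat.add_zero]; exact star_base hpar hij s
  | succ t ih =>
      intro hT
      have hT' : ∀ v : Fin n, desc par i v → j ≤ v → dep i + t ≤ dep v :=
        fun v h1 h2 => by have := hT v h1 h2; omega
      rw [ih hT']
      have hkey := fun (x : Fin n → S) => star_key (p := p) (s0 := s0) (y := y) hpar hbfs hij (d := dep i + t)
        (Nat.le_add_right _ _) (fun v h1 h2 hdep => by have := hT v h1 h2; omega) x s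
      symm
      calc ∑ z : Fin n → S, mu par dep p i s0 y (t+1) z
              * Rr par dep p i j s0 y (dep i + (t+1)) z s
          = ∑ z : Fin n → S, ∑ x : Fin n → S,
              (mu par dep p i s0 y t x * Kk par dep p i s0 (dep i + t + 1) x z)
              * Rr par dep p i j s0 y (dep i + t + 1) z s := by
            refine Finset.sum_congr rfl fun z _ => ?_
            simp only [mu]
            rw [Finset.sum_mul]
            rfl
        _ = ∑ x : Fin n → S, mu par dep p i s0 y t x
              * ∑ z : Fin n → S, Kk par dep p i s0 (dep i + t + 1) x z
                * Rr par dep p i j s0 y (dep i + t + 1) z s := by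
            rw [Finset.sum_comm]
            refine Finset.sum_congr rfl fun x _ => ?_
            rw [Finset.mul_sum]
            exact Finset.sum_congr rfl fun z _ => by ring
        _ = ∑ x : Fin n → S, mu par dep p i s0 y t x
              * Rr par dep p i j s0 y (dep i + t) x s := by
            refine Finset.sum_congr rfl fun x _ => ?_
            rw [hkey x]

end Chain

open Classical in
/-- `η̄_{ij} ≤ ∏_{d = dep(i)+1}^{dep(j₀)} α({θ_{uv} : v ∈ lev_T(d)})`. -/
theorem eta_le_prod_alpha {n : ℕ} {S : Type*} [Fintype S] [Nonempty S]
    (par : Fin n → Fin n) (dep : Fin n → ℕ)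
    (hroot : ∀ v : Fin n, (v : ℕ) = 0 → dep v = 0)
    (hpar : ∀ v : Fin n, (v : ℕ) ≠ 0 → par v < v ∧ dep v = dep (par v) + 1)
    (hbfs : ∀ u v : Fin n, dep u < dep v → u < v)
    (p0 : S → ℝ) (hp00 : ∀ s, 0 ≤ p0 s) (hp01 : ∑ s, p0 s = 1)
    (p : Fin n → S → S → ℝ)
    (hp0 : ∀ v : Fin n, (v : ℕ) ≠ 0 → ∀ b a, 0 ≤ p v a b)
    (hp1 : ∀ v : Fin n, (v : ℕ) ≠ 0 → ∀ b, ∑ a, p v a b = 1)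
    (i j : Fin n) (hij : i < j)
    (hne : (Tij par i j).Nonempty)
    (y y' : Fin n → S) (hyy' : ∀ v, v < i → y v = y' v) :
    eta par p i j y y' ≤
      ∏ d ∈ Finset.Icc (dep i + 1) (dep ((Tij par i j).min' hne)),
        alphaOn (Finset.univ.filter fun v : Fin n => dep v = d) (thetaCoef p) := by
  have s0 : S := Classical.arbitrary S
  set j0 := (Tij par i j).min' hne with hj0_def
  have hj0mem : j0 ∈ Tij par i j := (Tij par i j).min'_mem hne
  rw [Tij, Finset.mem_filter] at hj0mem
  have hdesc0 : desc par i j0 := hj0mem.2.1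
  have hjj0 : j ≤ j0 := hj0mem.2.2
  have hiD : dep i ≤ dep j0 := desc_dep hpar hdesc0
  set T := dep j0 - dep i with hT_def
  have hDt : dep i + T = dep j0 := by omega
  have hstarT : ∀ v : Fin n, desc par i v → j ≤ v → dep i + T ≤ dep v := by
    intro v h1 h2
    have hvmem : v ∈ Tij par i j := by
      rw [Tij, Finset.mem_filter]
      exact ⟨Finset.mem_univ v, h1, h2⟩
    have hle : j0 ≤ v := (Tij par i j).min'_le v hvmem
    have := dep_mono hbfs hle
    omega
  have hstar_y := star (par := par) (dep := dep) (p := p) (i := i) (j := j) (s0 := s0)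
    (y := y) hpar hbfs hij
  have hstar_y' := star (par := par) (dep := dep) (p := p) (i := i) (j := j) (s0 := s0)
    (y := y') hpar hbfs hij
  have hdiff : ∀ s : {v : Fin n // j ≤ v} → S,
      condP par p i j y s - condP par p i j y' s
      = ∑ z : Fin n → S,
          (mu par dep p i s0 y T z - mu par dep p i s0 y' T z)
            * Rr par dep p i j s0 y (dep i + T) z s := by
    intro s
    have hRe : ∀ z : Fin n → S, Rr par dep p i j s0 y' (dep i + T) z s
        = Rr par dep p i j s0 y (dep i + T) z s :=
      fun z => Rr_congr (y := y') (y' := y) (fun v hv => (hyy' v hv).symm) z s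
    rw [hstar_y s T hstarT, hstar_y' s T hstarT]
    simp only [hRe]
    rw [← Finset.sum_sub_distrib]
    exact Finset.sum_congr rfl fun z _ => by ring
  have hbound : eta par p i j y y'
      ≤ (1/2) * ∑ z : Fin n → S,
          |mu par dep p i s0 y T z - mu par dep p i s0 y' T z| := by
    rw [eta]
    have h1 : ∀ s : {v : Fin n // j ≤ v} → S,
        |condP par p i j y s - condP par p i j y' s|
        ≤ ∑ z : Fin n → S,
            |mu par dep p i s0 y T z - mu par dep p i s0 y' T z|
              * Rr par dep p i j s0 y (dep i + T) z s := by
      intro s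
      rw [hdiff s]
      refine (Finset.abs_sum_le_sum_abs _ _).trans ?_
      refine Finset.sum_le_sum fun z _ => le_of_eq ?_
      rw [abs_mul, abs_of_nonneg (Rr_nonneg hp0 z s)]
    have h2 : ∑ s : {v : Fin n // j ≤ v} → S,
        ∑ z : Fin n → S,
          |mu par dep p i s0 y T z - mu par dep p i s0 y' T z|
            * Rr par dep p i j s0 y (dep i + T) z s
        = ∑ z : Fin n → S,
            |mu par dep p i s0 y T z - mu par dep p i s0 y' T z| := by
      rw [Finset.sum_comm]
      refine Finset.sum_congr rfl fun z _ => ?_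
      rw [← Finset.mul_sum, Rr_sum hpar hp1 z, mul_one]
    have h3 := Finset.sum_le_sum fun s (_ : s ∈ (univ : Finset ({v : Fin n // j ≤ v} → S)))
      => h1 s
    rw [h2] at h3
    linarith
  refine hbound.trans ?_
  have := mu_tv (par := par) (dep := dep) (p := p) (i := i) (s0 := s0)
    hroot hp0 hp1 y y' T
  rw [hDt] at this
  exact this
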